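/- Let H ∈ (1/2, 1). For every t ∈ [0,T], the Rosenblatt kernel K^H_t(y₁, y₂) = e_H · 1_{[0,t]²}(y₁,y₂) · (y₁ y₂)^{−H/2} ∫_{y₁∨y₂}^t u^H (u−y₁)^{H/2−1}(u−y₂)^{H/2−1} du belongs to L²([0,T]²). -/

import Mathlib

open MeasureTheory Set Real
open scoped ENNReal

/-- The Rosenblatt kernel `K^H_t`. -/
noncomputable def rosenblattKernel (H eH t : ℝ) (y₁ y₂ : ℝ) : ℝ :=
  (Icc (0:ℝ) t ×ˢ Icc (0:ℝ) t).indicator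
    (fun p : ℝ × ℝ =>
      eH * (p.1 * p.2) ^ (-(H / 2)) *
        ∫ u in Ioc (max p.1 p.2) t, u ^ H * (u - p.1) ^ (H / 2 - 1) * (u - p.2) ^ (H / 2 - 1))
    (y₁, y₂)
/-- lintegral of `x ^ s` on `Ioc 0 a`. -/
lemma L0 (a s : ℝ) (ha : 0 ≤ a) (hs : -1 < s) :
    ∫⁻ x in Ioc (0:ℝ) a, ENNReal.ofReal (x ^ s) = ENNReal.ofReal (a^(s+1)/(s+1)) := by
  have hint : IntegrableOn (fun x : ℝ => x ^ s) (Ioc 0 a) :=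
    (intervalIntegrable_iff_integrableOn_Ioc_of_le ha).1
      (intervalIntegral.intervalIntegrable_rpow' hs)
  rw [← ofReal_integral_eq_lintegral_ofReal hint]
  · congr 1
    rw [← intervalIntegral.integral_of_le ha, integral_rpow (Or.inl hs),
      Real.zero_rpow (ne_of_gt (by linarith)), sub_zero]
  · filter_upwards [ae_restrict_mem measurableSet_Ioc] with x hx
    exact Real.rpow_nonneg hx.1.le _

lemma meas_rpow_const' (c : ℝ) : Measurable (fun x : ℝ => x ^ c) :=
  measurable_of_continuousOn_compl_singleton 0 <| continuousOn_of_forall_continuousAt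
    fun x hx => Real.continuousAt_rpow_const x c (Or.inl hx)

/-- key 1-D estimate -/
lemma L1 (T H : ℝ) (hH1 : 1/2 < H) (hH2 : H < 1) {y : ℝ} (hy : y ∈ Ioc (0:ℝ) T) :
    ∫⁻ x in Icc (0:ℝ) T, ENNReal.ofReal (|x|^(-H) * |x-y|^(H-3/2)) ≤
      ENNReal.ofReal ((2^(1/2:ℝ)/(1-H) + 2^(1/2:ℝ)/(H-1/2) + 2^H*T^(H-1/2)/(H-1/2)) *
        (y^(-(1/2):ℝ) + y^(-H))) := by
  obtain ⟨hy0, hyT⟩ := hy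
  have hT : (0:ℝ) < T := hy0.trans_le hyT
  have hy2 : (0:ℝ) < y/2 := by linarith
  set f : ℝ → ℝ≥0∞ := fun x => ENNReal.ofReal (|x|^(-H) * |x-y|^(H-3/2)) with hf_def
  have hsub : Icc (0:ℝ) T ⊆ {0} ∪ (Ioc 0 (y/2) ∪ Ioc (y/2) T) := by
    intro x hx
    rcases eq_or_lt_of_le hx.1 with h|h
    · exact Or.inl (by simp [← h])
    · right
      rcases le_or_gt x (y/2) with h'|h'
      · exact Or.inl ⟨h, h'⟩
      · exact Or.inr ⟨h', hx.2⟩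
  have step1 : ∫⁻ x in Icc (0:ℝ) T, f x ≤
      (∫⁻ x in Ioc (0:ℝ) (y/2), f x) + ∫⁻ x in Ioc (y/2) T, f x := by
    calc ∫⁻ x in Icc (0:ℝ) T, f x ≤ ∫⁻ x in {0} ∪ (Ioc 0 (y/2) ∪ Ioc (y/2) T), f x :=
          lintegral_mono_set hsub
      _ ≤ (∫⁻ x in {(0:ℝ)}, f x) + ∫⁻ x in Ioc (0:ℝ) (y/2) ∪ Ioc (y/2) T, f x :=
          lintegral_union_le _ _ _
      _ ≤ (∫⁻ x in {(0:ℝ)}, f x) + ((∫⁻ x in Ioc (0:ℝ) (y/2), f x) + ∫⁻ x in Ioc (y/2) T, f x) :=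
          add_le_add_right (lintegral_union_le _ _ _) _
      _ = (∫⁻ x in Ioc (0:ℝ) (y/2), f x) + ∫⁻ x in Ioc (y/2) T, f x := by
          rw [Measure.restrict_eq_zero.2 (by simp), lintegral_zero_measure, zero_add]
  -- piece 1
  have hI1 : ∫⁻ x in Ioc (0:ℝ) (y/2), f x ≤ ENNReal.ofReal (2^(1/2:ℝ)/(1-H) * y^(-(1/2):ℝ)) := by
    have hmono : ∫⁻ x in Ioc (0:ℝ) (y/2), f x ≤
        ∫⁻ x in Ioc (0:ℝ) (y/2), ENNReal.ofReal ((y/2)^(H-3/2)) * ENNReal.ofReal (x^(-H)) := by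
      refine setLIntegral_mono
        (g := fun x => ENNReal.ofReal ((y/2)^(H-3/2)) * ENNReal.ofReal (x^(-H)))
        (measurable_const.mul (ENNReal.measurable_ofReal.comp (meas_rpow_const' (-H)))) ?_
      intro x hx
      simp only [hf_def]
      have hx0 : (0:ℝ) < x := hx.1
      have hxy : x < y := lt_of_le_of_lt hx.2 (by linarith)
      rw [abs_of_pos hx0, abs_sub_comm, abs_of_pos (by linarith : (0:ℝ) < y - x),
        ← ENNReal.ofReal_mul (Real.rpow_nonneg hy2.le _)]
      apply ENNReal.ofReal_le_ofReal
      rw [mul_comm ((y/2)^(H-3/2))]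
      exact mul_le_mul_of_nonneg_left
        (Real.rpow_le_rpow_of_nonpos hy2 (by linarith [hx.2]) (by linarith))
        (Real.rpow_nonneg hx0.le _)
    refine hmono.trans ?_
    rw [lintegral_const_mul' _ _ ENNReal.ofReal_ne_top, L0 _ _ hy2.le (by linarith),
      ← ENNReal.ofReal_mul (Real.rpow_nonneg hy2.le _)]
    apply ENNReal.ofReal_le_ofReal
    apply le_of_eq
    rw [show (y/2)^(H-3/2) * ((y/2)^(-H+1)/(-H+1))
        = ((y/2)^(H-3/2)*(y/2)^(-H+1))*(1-H)⁻¹ by rw [show -H+1 = 1-H by ring]; ring,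
      ← Real.rpow_add hy2, show (H-3/2)+(-H+1) = -(1/2:ℝ) by ring,
      Real.div_rpow hy0.le (by norm_num : (0:ℝ) ≤ 2), div_eq_mul_inv,
      show ((2:ℝ)^(-(1/2):ℝ))⁻¹ = 2^(1/2:ℝ) by
        rw [← Real.rpow_neg (by norm_num : (0:ℝ) ≤ 2)]; norm_num]
    ring
  -- piece 2
  have hI2 : ∫⁻ x in Ioc (y/2) T, f x ≤
      ENNReal.ofReal (2^(1/2:ℝ)/(H-1/2) * y^(-(1/2):ℝ))
        + ENNReal.ofReal (2^H*T^(H-1/2)/(H-1/2) * y^(-H)) := by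
    have hmono : ∫⁻ x in Ioc (y/2) T, f x ≤
        ∫⁻ x in Ioc (y/2) T, ENNReal.ofReal ((y/2)^(-H)) * ENNReal.ofReal (|x-y|^(H-3/2)) := by
      refine setLIntegral_mono
        (g := fun x => ENNReal.ofReal ((y/2)^(-H)) * ENNReal.ofReal (|x-y|^(H-3/2)))
        (measurable_const.mul (ENNReal.measurable_ofReal.comp
          ((meas_rpow_const' (H-3/2)).comp ((measurable_id.sub measurable_const).abs)))) ?_
      intro x hx
      simp only [hf_def]
      have hx0 : (0:ℝ) < x := lt_trans hy2 hx.1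
      rw [abs_of_pos hx0, ← ENNReal.ofReal_mul (Real.rpow_nonneg hy2.le _)]
      apply ENNReal.ofReal_le_ofReal
      exact mul_le_mul_of_nonneg_right
        (Real.rpow_le_rpow_of_nonpos hy2 hx.1.le (by linarith))
        (Real.rpow_nonneg (abs_nonneg _) _)
    refine hmono.trans ?_
    rw [lintegral_const_mul' _ _ ENNReal.ofReal_ne_top]
    have hJ : ∫⁻ x in Ioc (y/2) T, ENNReal.ofReal (|x-y|^(H-3/2)) ≤
        ENNReal.ofReal ((y/2)^(H-1/2)/(H-1/2)) + ENNReal.ofReal (T^(H-1/2)/(H-1/2)) := by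
      have hsub2 : Ioc (y/2) T ⊆ Ioc (y/2) y ∪ Ioc y T := by
        intro x hx
        rcases le_or_gt x y with h|h
        · exact Or.inl ⟨hx.1, h⟩
        · exact Or.inr ⟨h, hx.2⟩
      refine (lintegral_mono_set hsub2).trans ((lintegral_union_le _ _ _).trans ?_)
      have hJ1 : ∫⁻ x in Ioc (y/2) y, ENNReal.ofReal (|x-y|^(H-3/2)) ≤
          ENNReal.ofReal ((y/2)^(H-1/2)/(H-1/2)) := by
        rw [setLIntegral_congr_fun measurableSet_Ioc
          (fun x hx => by rw [abs_sub_comm, abs_of_nonneg (by linarith [hx.2] : (0:ℝ) ≤ y - x)])]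
        have hint : IntegrableOn (fun x : ℝ => (y-x)^(H-3/2)) (Ioc (y/2) y) := by
          have := (intervalIntegral.intervalIntegrable_rpow' (r := H-3/2) (a := y/2)
            (b := 0) (by linarith)).comp_sub_left y
          rw [sub_zero, show y - y/2 = y/2 by ring] at this
          exact (intervalIntegrable_iff_integrableOn_Ioc_of_le (by linarith)).1
            (by simpa using this)
        rw [← ofReal_integral_eq_lintegral_ofReal hint (by
          filter_upwards [ae_restrict_mem measurableSet_Ioc] with x hx
          exact Real.rpow_nonneg (by linarith [hx.2]) _)]
        apply ENNReal.ofReal_le_ofReal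
        rw [← intervalIntegral.integral_of_le (by linarith : y/2 ≤ y),
          intervalIntegral.integral_comp_sub_left (fun x => x ^ (H-3/2)) y,
          sub_self, integral_rpow (Or.inl (by linarith)),
          Real.zero_rpow (ne_of_gt (by linarith)), sub_zero,
          show y - y/2 = y/2 by ring, show H-3/2+1 = H-1/2 by ring]
      have hJ2 : ∫⁻ x in Ioc y T, ENNReal.ofReal (|x-y|^(H-3/2)) ≤
          ENNReal.ofReal (T^(H-1/2)/(H-1/2)) := by
        rw [setLIntegral_congr_fun measurableSet_Ioc
          (fun x hx => by rw [abs_of_pos (by linarith [hx.1] : (0:ℝ) < x - y)])]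
        have hint : IntegrableOn (fun x : ℝ => (x-y)^(H-3/2)) (Ioc y T) := by
          have := (intervalIntegral.intervalIntegrable_rpow' (r := H-3/2) (a := 0)
            (b := T - y) (by linarith)).comp_sub_right y
          exact (intervalIntegrable_iff_integrableOn_Ioc_of_le hyT).1 (by simpa using this)
        rw [← ofReal_integral_eq_lintegral_ofReal hint (by
          filter_upwards [ae_restrict_mem measurableSet_Ioc] with x hx
          exact Real.rpow_nonneg (by linarith [hx.1]) _)]
        apply ENNReal.ofReal_le_ofReal
        rw [← intervalIntegral.integral_of_le hyT,
          intervalIntegral.integral_comp_sub_right (fun x => x ^ (H-3/2)) y,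
          sub_self, integral_rpow (Or.inl (by linarith)),
          Real.zero_rpow (ne_of_gt (by linarith)), sub_zero,
          show H-3/2+1 = H-1/2 by ring]
        have h1 : (T - y)^(H-1/2) ≤ T^(H-1/2) :=
          Real.rpow_le_rpow (by linarith) (by linarith) (by linarith)
        apply div_le_div_of_nonneg_right h1 (by linarith)
      exact add_le_add hJ1 hJ2
    calc ENNReal.ofReal ((y/2)^(-H)) * ∫⁻ x in Ioc (y/2) T, ENNReal.ofReal (|x-y|^(H-3/2))
        ≤ ENNReal.ofReal ((y/2)^(-H)) *
          (ENNReal.ofReal ((y/2)^(H-1/2)/(H-1/2)) + ENNReal.ofReal (T^(H-1/2)/(H-1/2))) :=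
          mul_le_mul_right hJ _
      _ = ENNReal.ofReal ((y/2)^(-H) * ((y/2)^(H-1/2)/(H-1/2)))
          + ENNReal.ofReal ((y/2)^(-H) * (T^(H-1/2)/(H-1/2))) := by
          rw [mul_add, ← ENNReal.ofReal_mul (Real.rpow_nonneg hy2.le _),
            ← ENNReal.ofReal_mul (Real.rpow_nonneg hy2.le _)]
      _ = ENNReal.ofReal (2^(1/2:ℝ)/(H-1/2) * y^(-(1/2):ℝ))
          + ENNReal.ofReal (2^H*T^(H-1/2)/(H-1/2) * y^(-H)) := by
          have e1 : (y/2)^(-H) * ((y/2)^(H-1/2)/(H-1/2)) = 2^(1/2:ℝ)/(H-1/2) * y^(-(1/2):ℝ) := by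
            rw [show (y/2)^(-H) * ((y/2)^(H-1/2)/(H-1/2))
              = ((y/2)^(-H)*(y/2)^(H-1/2))*(H-1/2)⁻¹ by ring,
              ← Real.rpow_add hy2, show -H+(H-1/2) = -(1/2:ℝ) by ring,
              Real.div_rpow hy0.le (by norm_num : (0:ℝ) ≤ 2), div_eq_mul_inv,
              show ((2:ℝ)^(-(1/2):ℝ))⁻¹ = 2^(1/2:ℝ) by
                rw [← Real.rpow_neg (by norm_num : (0:ℝ) ≤ 2)]; norm_num]
            ring
          have e2 : (y/2)^(-H) * (T^(H-1/2)/(H-1/2)) = 2^H*T^(H-1/2)/(H-1/2) * y^(-H) := by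
            rw [Real.div_rpow hy0.le (by norm_num : (0:ℝ) ≤ 2), div_eq_mul_inv,
              show ((2:ℝ)^(-H))⁻¹ = 2^H by
                rw [← Real.rpow_neg (by norm_num : (0:ℝ) ≤ 2), neg_neg]]
            ring
          rw [e1, e2]
  have u1 : (0:ℝ) ≤ y^(-(1/2):ℝ) := Real.rpow_nonneg hy0.le _
  have u2 : (0:ℝ) ≤ y^(-H) := Real.rpow_nonneg hy0.le _
  have a1 : (0:ℝ) ≤ 2^(1/2:ℝ)/(1-H) :=
    div_nonneg (Real.rpow_nonneg (by norm_num) _) (by linarith)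
  have a2 : (0:ℝ) ≤ 2^(1/2:ℝ)/(H-1/2) :=
    div_nonneg (Real.rpow_nonneg (by norm_num) _) (by linarith)
  have a3 : (0:ℝ) ≤ 2^H*T^(H-1/2)/(H-1/2) :=
    div_nonneg (mul_nonneg (Real.rpow_nonneg (by norm_num) _) (Real.rpow_nonneg hT.le _))
      (by linarith)
  refine step1.trans ((add_le_add hI1 hI2).trans ?_)
  rw [← add_assoc, ← ENNReal.ofReal_add (mul_nonneg a1 u1) (mul_nonneg a2 u1),
    ← ENNReal.ofReal_add (add_nonneg (mul_nonneg a1 u1) (mul_nonneg a2 u1)) (mul_nonneg a3 u2)]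
  apply ENNReal.ofReal_le_ofReal
  nlinarith [mul_nonneg a1 u2, mul_nonneg a2 u2, mul_nonneg a3 u1]


lemma keyI (T H t y₁ y₂ : ℝ) (hH1 : 1/2 < H) (hH2 : H < 1) (h1 : 0 < y₁) (h12 : y₁ < y₂)
    (h2 : y₂ ≤ t) (htT : t ≤ T) :
    |∫ u in Ioc y₂ t, u ^ H * (u - y₁) ^ (H / 2 - 1) * (u - y₂) ^ (H / 2 - 1)| ≤
      (2:ℝ)^H * (1+T) / (H/2 - 1/4) * (y₂ ^ H * (y₂ - y₁) ^ (H/2 - 3/4))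
        + 2^(2-H)*(1+T)/(2*H-1) := by
  have h20 : (0:ℝ) < y₂ := h1.trans h12
  have h0t : 0 < t := h20.trans_le h2
  have hT : 0 < T := h0t.trans_le htT
  have hd : (0:ℝ) < y₂ - y₁ := by linarith
  have hi1 : IntegrableOn (fun u => (u - y₂) ^ (H/2-5/4)) (Ioc y₂ t) := by
    have h' : IntervalIntegrable (fun x => (x - y₂)^(H/2-5/4)) volume y₂ t := by
      have := (intervalIntegral.intervalIntegrable_rpow' (r := H/2-5/4) (a := 0)
        (b := t - y₂) (by linarith)).comp_sub_right y₂
      simpa using this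
    exact (intervalIntegrable_iff_integrableOn_Ioc_of_le h2).1 h'
  have hi2 : IntegrableOn (fun u : ℝ => u^(2*H-2)) (Ioc y₂ t) :=
    (intervalIntegrable_iff_integrableOn_Ioc_of_le h2).1
      (intervalIntegral.intervalIntegrable_rpow' (by linarith))
  have hi2' : IntegrableOn (fun u : ℝ => u^(2*H-2)) (Ioc 0 t) :=
    (intervalIntegrable_iff_integrableOn_Ioc_of_le h0t.le).1
      (intervalIntegral.intervalIntegrable_rpow' (by linarith))
  have hg : IntegrableOn (fun u => 2^H*y₂^H*(y₂-y₁)^(H/2-3/4)*(u-y₂)^(H/2-5/4)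
      + 2^(2-H)*u^(2*H-2)) (Ioc y₂ t) := ((hi1.const_mul _).add (hi2.const_mul _))
  have hbound : ∀ᵐ u ∂(volume.restrict (Ioc y₂ t)),
      ‖u ^ H * (u - y₁) ^ (H / 2 - 1) * (u - y₂) ^ (H / 2 - 1)‖ ≤
      2^H*y₂^H*(y₂-y₁)^(H/2-3/4)*(u-y₂)^(H/2-5/4) + 2^(2-H)*u^(2*H-2) := by
    filter_upwards [ae_restrict_mem measurableSet_Ioc] with u hu
    obtain ⟨hy2u, hut⟩ := hu
    have hu0 : (0:ℝ) < u := h20.trans hy2u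
    have huy1 : (0:ℝ) < u - y₁ := by linarith
    have huy2 : (0:ℝ) < u - y₂ := by linarith
    have hnn1 : (0:ℝ) ≤ 2^H*y₂^H*(y₂-y₁)^(H/2-3/4)*(u-y₂)^(H/2-5/4) :=
      mul_nonneg (mul_nonneg (mul_nonneg (Real.rpow_nonneg (by norm_num) _)
        (Real.rpow_nonneg h20.le _)) (Real.rpow_nonneg hd.le _)) (Real.rpow_nonneg huy2.le _)
    have hnn2 : (0:ℝ) ≤ 2^(2-H)*u^(2*H-2) :=
      mul_nonneg (Real.rpow_nonneg (by norm_num) _) (Real.rpow_nonneg hu0.le _)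
    rw [Real.norm_eq_abs, abs_of_nonneg (mul_nonneg (mul_nonneg (Real.rpow_nonneg hu0.le _)
      (Real.rpow_nonneg huy1.le _)) (Real.rpow_nonneg huy2.le _))]
    by_cases hcase : u ≤ 2*y₂
    · have A1 : u^H ≤ 2^H*y₂^H := by
        rw [← Real.mul_rpow (by norm_num) h20.le]
        exact Real.rpow_le_rpow hu0.le hcase (by linarith)
      have A2 : (u - y₁)^(H/2-1) ≤ (u-y₂)^(-(1/4):ℝ) * (y₂-y₁)^(H/2-3/4) := by
        have e1 : (u - y₁)^(H/2-1) = (u-y₁)^(-(1/4):ℝ) * (u-y₁)^(H/2-3/4) := by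
          rw [← Real.rpow_add huy1]; congr 1; ring
        rw [e1]
        apply mul_le_mul
        · exact Real.rpow_le_rpow_of_nonpos huy2 (by linarith) (by norm_num)
        · exact Real.rpow_le_rpow_of_nonpos hd (by linarith) (by linarith)
        · exact Real.rpow_nonneg huy1.le _
        · exact Real.rpow_nonneg huy2.le _
      have key : u ^ H * (u - y₁) ^ (H / 2 - 1) * (u - y₂) ^ (H / 2 - 1) ≤
          (2^H*y₂^H) * ((u-y₂)^(-(1/4):ℝ) * (y₂-y₁)^(H/2-3/4)) * (u - y₂) ^ (H / 2 - 1) := by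
        apply mul_le_mul_of_nonneg_right _ (Real.rpow_nonneg huy2.le _)
        apply mul_le_mul A1 A2 (Real.rpow_nonneg huy1.le _)
          (mul_nonneg (Real.rpow_nonneg (by norm_num) _) (Real.rpow_nonneg h20.le _))
      refine key.trans ?_
      have e2 : (2^H*y₂^H) * ((u-y₂)^(-(1/4):ℝ) * (y₂-y₁)^(H/2-3/4)) * (u - y₂) ^ (H / 2 - 1)
          = 2^H*y₂^H*(y₂-y₁)^(H/2-3/4)*(u-y₂)^(H/2-5/4) := by
        rw [show (H/2-5/4) = -(1/4) + (H/2-1) by ring, Real.rpow_add huy2]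
        ring
      rw [e2]
      linarith
    · push_neg at hcase
      have hu2 : u/2 < u - y₂ := by linarith
      have hu2' : u/2 < u - y₁ := by linarith
      have hu20 : (0:ℝ) < u/2 := by linarith
      have B1 : (u - y₁)^(H/2-1) ≤ (u/2)^(H/2-1) :=
        Real.rpow_le_rpow_of_nonpos hu20 hu2'.le (by linarith)
      have B2 : (u - y₂)^(H/2-1) ≤ (u/2)^(H/2-1) :=
        Real.rpow_le_rpow_of_nonpos hu20 hu2.le (by linarith)
      have key : u ^ H * (u - y₁) ^ (H / 2 - 1) * (u - y₂) ^ (H / 2 - 1) ≤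
          u ^ H * (u/2)^(H/2-1) * (u/2)^(H/2-1) :=
        mul_le_mul (mul_le_mul (le_refl (u^H)) B1 (Real.rpow_nonneg huy1.le _)
            (Real.rpow_nonneg hu0.le _))
          B2 (Real.rpow_nonneg huy2.le _)
          (mul_nonneg (Real.rpow_nonneg hu0.le _) (Real.rpow_nonneg hu20.le _))
      have e3 : u ^ H * (u/2)^(H/2-1) * (u/2)^(H/2-1) = 2^(2-H)*u^(2*H-2) := by
        rw [mul_assoc, ← Real.rpow_add hu20, show (H/2-1) + (H/2-1) = H - 2 by ring,
          Real.div_rpow hu0.le (by norm_num : (0:ℝ) ≤ 2)]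
        have h7 : ((2:ℝ)^(H-2))⁻¹ = 2^(2-H) := by
          rw [← Real.rpow_neg (by norm_num : (0:ℝ) ≤ 2)]; congr 1; ring
        rw [div_eq_mul_inv, show u^H * (u^(H-2) * ((2:ℝ)^(H-2))⁻¹)
            = (u^H * u^(H-2)) * ((2:ℝ)^(H-2))⁻¹ by ring, h7,
          ← Real.rpow_add hu0, show H + (H-2) = 2*H-2 by ring]
        ring
      refine key.trans (le_trans (le_of_eq e3) ?_)
      linarith
  calc |∫ u in Ioc y₂ t, u ^ H * (u - y₁) ^ (H / 2 - 1) * (u - y₂) ^ (H / 2 - 1)|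
      ≤ ∫ u in Ioc y₂ t, (2^H*y₂^H*(y₂-y₁)^(H/2-3/4)*(u-y₂)^(H/2-5/4)
          + 2^(2-H)*u^(2*H-2)) := by
        rw [← Real.norm_eq_abs]
        exact norm_integral_le_of_norm_le hg hbound
    _ = (2^H*y₂^H*(y₂-y₁)^(H/2-3/4)) * (∫ u in Ioc y₂ t, (u-y₂)^(H/2-5/4))
          + 2^(2-H) * (∫ u in Ioc y₂ t, u^(2*H-2)) := by
        rw [MeasureTheory.integral_add (hi1.const_mul _) (hi2.const_mul _),
          MeasureTheory.integral_const_mul, MeasureTheory.integral_const_mul]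
    _ ≤ (2^H*y₂^H*(y₂-y₁)^(H/2-3/4)) * ((1+T)/(H/2-1/4)) + 2^(2-H) * ((1+T)/(2*H-1)) := by
        have hI1 : (∫ u in Ioc y₂ t, (u-y₂)^(H/2-5/4)) ≤ (1+T)/(H/2-1/4) := by
          rw [← intervalIntegral.integral_of_le h2,
            intervalIntegral.integral_comp_sub_right (fun x => x ^ (H/2-5/4)) y₂,
            integral_rpow (Or.inl (by linarith))]
          have e4 : (H/2-5/4) + 1 = H/2 - 1/4 := by ring
          rw [sub_self, Real.zero_rpow (ne_of_gt (by linarith : (0:ℝ) < H/2-5/4+1)), e4, sub_zero]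
          have hle : (t - y₂)^(H/2-1/4) ≤ 1+T := by
            calc (t - y₂)^(H/2-1/4) ≤ (1+T)^(H/2-1/4) :=
                  Real.rpow_le_rpow (by linarith) (by linarith) (by linarith)
              _ ≤ (1+T)^(1:ℝ) :=
                  Real.rpow_le_rpow_of_exponent_le (by linarith) (by linarith)
              _ = 1+T := Real.rpow_one _
          gcongr
          linarith
        have hI2 : (∫ u in Ioc y₂ t, u^(2*H-2)) ≤ (1+T)/(2*H-1) := by
          have hmono : (∫ u in Ioc y₂ t, u^(2*H-2)) ≤ ∫ u in Ioc 0 t, u^(2*H-2) := by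
            apply setIntegral_mono_set hi2' ?_
              (HasSubset.Subset.eventuallyLE (Ioc_subset_Ioc_left h20.le))
            filter_upwards [ae_restrict_mem measurableSet_Ioc] with u hu
            exact Real.rpow_nonneg (le_of_lt hu.1) _
          refine hmono.trans ?_
          rw [← intervalIntegral.integral_of_le h0t.le, integral_rpow (Or.inl (by linarith))]
          rw [Real.zero_rpow (ne_of_gt (by linarith : (0:ℝ) < 2*H-2+1)), sub_zero,
            show 2*H-2+1 = 2*H-1 by ring]
          have hle : t^(2*H-1) ≤ 1+T := by
            calc t^(2*H-1) ≤ (1+T)^(2*H-1) :=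
                  Real.rpow_le_rpow h0t.le (by linarith) (by linarith)
              _ ≤ (1+T)^(1:ℝ) :=
                  Real.rpow_le_rpow_of_exponent_le (by linarith) (by linarith)
              _ = 1+T := Real.rpow_one _
          gcongr
          linarith
        have c1 : (0:ℝ) ≤ 2^H*y₂^H*(y₂-y₁)^(H/2-3/4) :=
          mul_nonneg (mul_nonneg (Real.rpow_nonneg (by norm_num) _)
            (Real.rpow_nonneg h20.le _)) (Real.rpow_nonneg hd.le _)
        have c2 : (0:ℝ) ≤ (2:ℝ)^(2-H) := Real.rpow_nonneg (by norm_num) _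
        exact add_le_add (mul_le_mul_of_nonneg_left hI1 c1) (mul_le_mul_of_nonneg_left hI2 c2)
    _ = (2:ℝ)^H * (1+T) / (H/2 - 1/4) * (y₂ ^ H * (y₂ - y₁) ^ (H/2 - 3/4))
          + 2^(2-H)*(1+T)/(2*H-1) := by ring


lemma hne0_ae (T : ℝ) : ∀ᵐ y ∂(volume.restrict (Icc (0:ℝ) T)), y ≠ 0 := by
  rw [ae_iff]
  refine measure_mono_null (t := ({0} : Set ℝ)) (fun y hy => ?_) ?_
  · simp only [mem_setOf_eq, not_not] at hy
    exact (mem_singleton_iff.mpr hy : y ∈ ({0} : Set ℝ))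
  · exact le_antisymm ((Measure.restrict_apply_le _ _).trans (by simp)) zero_le

/-- outer integral bound -/
lemma L2 (T H c cL : ℝ) (hH1 : 1/2 < H) (hH2 : H < 1) (hT : 0 < T) (hc : 0 ≤ c) (hcL : 0 ≤ cL)
    (Q : ℝ → ℝ≥0∞)
    (hQ : ∀ y ∈ Ioc (0:ℝ) T, Q y ≤ ENNReal.ofReal (cL * (y^(-(1/2):ℝ) + y^(-H)))) :
    ∫⁻ y in Icc (0:ℝ) T, (ENNReal.ofReal (c * |y|^H) * Q y) < ⊤ := by
  have hae : ∀ᵐ y ∂(volume.restrict (Icc (0:ℝ) T)),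
      ENNReal.ofReal (c * |y|^H) * Q y ≤ ENNReal.ofReal (c * cL * (T^(H-1/2) + 1)) := by
    filter_upwards [ae_restrict_mem measurableSet_Icc, hne0_ae T] with y hy hyne
    have hy0 : (0:ℝ) < y := lt_of_le_of_ne hy.1 (Ne.symm hyne)
    calc ENNReal.ofReal (c * |y|^H) * Q y
        ≤ ENNReal.ofReal (c * |y|^H) * ENNReal.ofReal (cL * (y^(-(1/2):ℝ) + y^(-H))) :=
          mul_le_mul_right (hQ y ⟨hy0, hy.2⟩) _
      _ = ENNReal.ofReal ((c * y^H) * (cL * (y^(-(1/2):ℝ) + y^(-H)))) := by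
          rw [abs_of_pos hy0, ← ENNReal.ofReal_mul (mul_nonneg hc (Real.rpow_nonneg hy0.le _))]
      _ ≤ ENNReal.ofReal (c * cL * (T^(H-1/2) + 1)) := by
          apply ENNReal.ofReal_le_ofReal
          have ha : y^H * y^(-(1/2):ℝ) = y^(H-1/2) := by
            rw [← Real.rpow_add hy0, show H + -(1/2:ℝ) = H - 1/2 by ring]
          have hb : y^H * y^(-H) = 1 := by
            rw [← Real.rpow_add hy0, show H + -H = 0 by ring, Real.rpow_zero]
          rw [show (c * y^H) * (cL * (y^(-(1/2):ℝ) + y^(-H)))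
            = c * cL * (y^H * y^(-(1/2):ℝ) + y^H * y^(-H)) by ring, ha, hb]
          apply mul_le_mul_of_nonneg_left _ (mul_nonneg hc hcL)
          have : y^(H-1/2) ≤ T^(H-1/2) := Real.rpow_le_rpow hy0.le hy.2 (by linarith)
          linarith
  calc ∫⁻ y in Icc (0:ℝ) T, (ENNReal.ofReal (c * |y|^H) * Q y)
      ≤ ∫⁻ _ in Icc (0:ℝ) T, ENNReal.ofReal (c * cL * (T^(H-1/2) + 1)) := lintegral_mono_ae hae
    _ = ENNReal.ofReal (c * cL * (T^(H-1/2) + 1)) * volume (Icc (0:ℝ) T) := setLIntegral_const _ _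
    _ < ⊤ := ENNReal.mul_lt_top ENNReal.ofReal_lt_top (by rw [Real.volume_Icc]; exact ENNReal.ofReal_lt_top)


lemma core (T H eH t y₁ y₂ : ℝ) (hH1 : 1/2 < H) (hH2 : H < 1)
    (h1 : 0 < y₁) (h12 : y₁ < y₂) (h2 : y₂ ≤ t) (htT : t ≤ T) :
    (eH * (y₁*y₂) ^ (-(H/2)) *
        ∫ u in Ioc y₂ t, u ^ H * (u - y₁) ^ (H / 2 - 1) * (u - y₂) ^ (H / 2 - 1))^2 ≤
      (2*eH^2*((2:ℝ)^H * (1+T) / (H/2 - 1/4))^2) * (y₁^(-H) * y₂^H * (y₂-y₁)^(H-3/2))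
        + (2*eH^2*(2^(2-H)*(1+T)/(2*H-1))^2) * (y₁^(-H) * y₂^(-H)) := by
  have h20 : (0:ℝ) < y₂ := h1.trans h12
  have hd : (0:ℝ) < y₂ - y₁ := by linarith
  set A := (2:ℝ)^H * (1+T) / (H/2 - 1/4) with hA
  set B := (2:ℝ)^(2-H)*(1+T)/(2*H-1) with hB
  set I := ∫ u in Ioc y₂ t, u ^ H * (u - y₁) ^ (H / 2 - 1) * (u - y₂) ^ (H / 2 - 1) with hI
  set X := (y₁*y₂) ^ (-(H/2)) with hX
  have habs := abs_le.mp (keyI T H t y₁ y₂ hH1 hH2 h1 h12 h2 htT)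
  have hM : I^2 ≤ (A * (y₂ ^ H * (y₂ - y₁) ^ (H/2 - 3/4)) + B)^2 :=
    sq_le_sq' habs.1 habs.2
  have hM2 : (A * (y₂ ^ H * (y₂ - y₁) ^ (H/2 - 3/4)) + B)^2 ≤
      2*(A * (y₂ ^ H * (y₂ - y₁) ^ (H/2 - 3/4)))^2 + 2*B^2 := by
    nlinarith [sq_nonneg (A * (y₂ ^ H * (y₂ - y₁) ^ (H/2 - 3/4)) - B)]
  have hXX : X^2 = y₁^(-H) * y₂^(-H) := by
    rw [hX, sq, ← Real.rpow_add (mul_pos h1 h20), show -(H/2)+-(H/2) = -H by ring,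
      Real.mul_rpow h1.le h20.le]
  have hsq1 : (y₂^H)^2 = y₂^(2*H) := by
    rw [sq, ← Real.rpow_add h20]; congr 1; ring
  have hsq2 : ((y₂-y₁)^(H/2-3/4))^2 = (y₂-y₁)^(H-3/2) := by
    rw [sq, ← Real.rpow_add hd]; congr 1; ring
  have hcomb : y₂^(-H) * y₂^(2*H) = y₂^H := by
    rw [← Real.rpow_add h20]; congr 1; ring
  have hX2 : (0:ℝ) ≤ X^2 := sq_nonneg _
  calc (eH * X * I)^2 = eH^2 * X^2 * I^2 := by ring
    _ ≤ eH^2 * X^2 * (A * (y₂ ^ H * (y₂ - y₁) ^ (H/2 - 3/4)) + B)^2 := by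
        apply mul_le_mul_of_nonneg_left hM (by positivity)
    _ ≤ eH^2 * X^2 * (2*(A * (y₂ ^ H * (y₂ - y₁) ^ (H/2 - 3/4)))^2 + 2*B^2) := by
        apply mul_le_mul_of_nonneg_left hM2 (by positivity)
    _ = (2*eH^2*A^2) * (y₁^(-H) * y₂^H * (y₂-y₁)^(H-3/2)) + (2*eH^2*B^2) * (y₁^(-H) * y₂^(-H)) := by
        rw [hXX]
        rw [mul_pow A, mul_pow (y₂^H), hsq1, hsq2]
        rw [show eH ^ 2 * (y₁ ^ (-H) * y₂ ^ (-H)) * (2 * (A ^ 2 * (y₂ ^ (2*H) * (y₂ - y₁) ^ (H - 3/2))) + 2 * B ^ 2)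
          = 2 * eH ^ 2 * A ^ 2 * (y₁ ^ (-H) * (y₂ ^ (-H) * y₂ ^ (2*H)) * (y₂ - y₁) ^ (H - 3/2))
            + 2 * eH ^ 2 * B ^ 2 * (y₁ ^ (-H) * y₂ ^ (-H)) by ring, hcomb]


lemma meas_rpow_const (c : ℝ) : Measurable (fun x : ℝ => x ^ c) :=
  measurable_of_continuousOn_compl_singleton 0 <| continuousOn_of_forall_continuousAt
    fun x hx => Real.continuousAt_rpow_const x c (Or.inl hx)

lemma meas_kernel (H eH t : ℝ) :
    Measurable (fun p : ℝ × ℝ => (Icc (0:ℝ) t ×ˢ Icc (0:ℝ) t).indicator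
      (fun p : ℝ × ℝ =>
        eH * (p.1 * p.2) ^ (-(H / 2)) *
          ∫ u in Ioc (max p.1 p.2) t, u ^ H * (u - p.1) ^ (H / 2 - 1) * (u - p.2) ^ (H / 2 - 1)) p) := by
  apply Measurable.indicator _ (measurableSet_Icc.prod measurableSet_Icc)
  apply Measurable.mul
  · exact measurable_const.mul ((meas_rpow_const (-(H/2))).comp (measurable_fst.mul measurable_snd))
  · have hbody : Measurable (fun q : (ℝ × ℝ) × ℝ =>
        ({q : (ℝ × ℝ) × ℝ | max q.1.1 q.1.2 < q.2 ∧ q.2 ≤ t}).indicator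
          (fun q : (ℝ × ℝ) × ℝ => q.2 ^ H * (q.2 - q.1.1) ^ (H / 2 - 1) * (q.2 - q.1.2) ^ (H / 2 - 1)) q) := by
      apply Measurable.indicator
      · exact (((meas_rpow_const H).comp measurable_snd).mul
          ((meas_rpow_const (H/2-1)).comp (measurable_snd.sub measurable_fst.fst))).mul
          ((meas_rpow_const (H/2-1)).comp (measurable_snd.sub measurable_fst.snd))
      · exact ((measurableSet_lt (measurable_fst.fst.max measurable_fst.snd) measurable_snd).inter
          (measurableSet_le measurable_snd measurable_const))
    have hmeas := (hbody.stronglyMeasurable.integral_prod_right' (ν := volume)).measurable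
    have heq : (fun p : ℝ × ℝ =>
        ∫ u in Ioc (max p.1 p.2) t, u ^ H * (u - p.1) ^ (H / 2 - 1) * (u - p.2) ^ (H / 2 - 1))
        = (fun p : ℝ × ℝ => ∫ u, ({q : (ℝ × ℝ) × ℝ | max q.1.1 q.1.2 < q.2 ∧ q.2 ≤ t}).indicator
          (fun q : (ℝ × ℝ) × ℝ => q.2 ^ H * (q.2 - q.1.1) ^ (H / 2 - 1) * (q.2 - q.1.2) ^ (H / 2 - 1)) (p, u)) := by
      funext p
      rw [← MeasureTheory.integral_indicator measurableSet_Ioc]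
      congr 1
    rw [heq]
    exact hmeas

/-- `K^H_t ∈ L²([0,T]²)` for every `t ∈ [0,T]`. -/
theorem stmt3 (T H eH : ℝ) (hT : 0 < T) (hH : H ∈ Ioo (1/2 : ℝ) 1) (heH : 0 < eH)
    (t : ℝ) (ht : t ∈ Icc (0:ℝ) T) :
    MemLp (fun p : ℝ × ℝ => rosenblattKernel H eH t p.1 p.2) 2
      ((volume.restrict (Icc (0:ℝ) T)).prod (volume.restrict (Icc (0:ℝ) T))) := by
  obtain ⟨hH1, hH2⟩ := hH
  obtain ⟨ht0, htT⟩ := ht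
  set μ := (volume.restrict (Icc (0:ℝ) T)).prod (volume.restrict (Icc (0:ℝ) T)) with hμ
  have hc₁ : (0:ℝ) ≤ 2*eH^2*((2:ℝ)^H * (1+T) / (H/2 - 1/4))^2 := by positivity
  have hc₂ : (0:ℝ) ≤ 2*eH^2*((2:ℝ)^(2-H)*(1+T)/(2*H-1))^2 := by positivity
  set c₁ := 2*eH^2*((2:ℝ)^H * (1+T) / (H/2 - 1/4))^2 with hc₁def
  set c₂ := 2*eH^2*((2:ℝ)^(2-H)*(1+T)/(2*H-1))^2 with hc₂def
  have hcL : (0:ℝ) ≤ 2^(1/2:ℝ)/(1-H) + 2^(1/2:ℝ)/(H-1/2) + 2^H*T^(H-1/2)/(H-1/2) := by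
    have a1 : (0:ℝ) ≤ 2^(1/2:ℝ)/(1-H) :=
      div_nonneg (Real.rpow_nonneg (by norm_num) _) (by linarith)
    have a2 : (0:ℝ) ≤ 2^(1/2:ℝ)/(H-1/2) :=
      div_nonneg (Real.rpow_nonneg (by norm_num) _) (by linarith)
    have a3 : (0:ℝ) ≤ 2^H*T^(H-1/2)/(H-1/2) :=
      div_nonneg (mul_nonneg (Real.rpow_nonneg (by norm_num) _) (Real.rpow_nonneg hT.le _))
        (by linarith)
    linarith
  have hm1 : Measurable (fun p : ℝ×ℝ =>
      ENNReal.ofReal (c₁ * (|p.1|^(-H) * |p.2|^H * |p.1-p.2|^(H-3/2)))) :=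
    ENNReal.measurable_ofReal.comp (measurable_const.mul
      ((((meas_rpow_const (-H)).comp measurable_fst.abs).mul
        ((meas_rpow_const H).comp measurable_snd.abs)).mul
        ((meas_rpow_const (H-3/2)).comp (measurable_fst.sub measurable_snd).abs)))
  have hm2 : Measurable (fun p : ℝ×ℝ =>
      ENNReal.ofReal (c₁ * (|p.1|^H * |p.2|^(-H) * |p.1-p.2|^(H-3/2)))) :=
    ENNReal.measurable_ofReal.comp (measurable_const.mul
      ((((meas_rpow_const H).comp measurable_fst.abs).mul
        ((meas_rpow_const (-H)).comp measurable_snd.abs)).mul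
        ((meas_rpow_const (H-3/2)).comp (measurable_fst.sub measurable_snd).abs)))
  have hm3 : Measurable (fun p : ℝ×ℝ =>
      ENNReal.ofReal (c₂ * (|p.1|^(-H) * |p.2|^(-H)))) :=
    ENNReal.measurable_ofReal.comp (measurable_const.mul
      (((meas_rpow_const (-H)).comp measurable_fst.abs).mul
        ((meas_rpow_const (-H)).comp measurable_snd.abs)))
  constructor
  · exact (meas_kernel H eH t).aestronglyMeasurable
  · rw [eLpNorm_lt_top_iff_lintegral_rpow_enorm_lt_top (by norm_num) (by norm_num)]
    simp only [ENNReal.toReal_ofNat]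
    -- a.e. pointwise bound
    have haeP : ∀ᵐ p ∂μ, p.1 ∈ Icc (0:ℝ) T ∧ p.2 ∈ Icc (0:ℝ) T := by
      rw [hμ, Measure.prod_restrict]
      filter_upwards [ae_restrict_mem (measurableSet_Icc.prod measurableSet_Icc)] with p hp
      exact hp
    have hsing : (volume.restrict (Icc (0:ℝ) T)) ({0} : Set ℝ) = 0 :=
      le_antisymm ((Measure.restrict_apply_le _ _).trans (by simp)) zero_le
    have haeD : ∀ᵐ p ∂μ, p.1 ≠ p.2 := by
      rw [ae_iff]
      have hD : MeasurableSet {p : ℝ×ℝ | p.1 = p.2} :=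
        measurableSet_eq_fun measurable_fst measurable_snd
      have hset : {p : ℝ×ℝ | ¬ p.1 ≠ p.2} = {p : ℝ×ℝ | p.1 = p.2} := by ext p; simp
      rw [hset, hμ, Measure.prod_apply hD]
      have hsec : ∀ x : ℝ,
          (volume.restrict (Icc (0:ℝ) T)) (Prod.mk x ⁻¹' {p : ℝ×ℝ | p.1 = p.2}) = 0 := by
        intro x
        have hx : Prod.mk x ⁻¹' {p : ℝ×ℝ | p.1 = p.2} = {x} := by ext z; simp [eq_comm]
        rw [hx]
        exact le_antisymm ((Measure.restrict_apply_le _ _).trans (by simp)) zero_le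
      simp [hsec]
    have haeX : ∀ᵐ p ∂μ, p.1 ≠ 0 := by
      rw [ae_iff]
      have h1 : {p : ℝ×ℝ | ¬ p.1 ≠ 0} = ({0} : Set ℝ) ×ˢ (univ : Set ℝ) := by
        ext p
        simp only [mem_setOf_eq, not_not, Set.mem_prod, mem_singleton_iff, mem_univ, and_true]
      rw [h1, hμ, Measure.prod_prod, hsing, zero_mul]
    have haeY : ∀ᵐ p ∂μ, p.2 ≠ 0 := by
      rw [ae_iff]
      have h1 : {p : ℝ×ℝ | ¬ p.2 ≠ 0} = (univ : Set ℝ) ×ˢ ({0} : Set ℝ) := by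
        ext p
        simp only [mem_setOf_eq, not_not, Set.mem_prod, mem_singleton_iff, mem_univ, true_and]
      rw [h1, hμ, Measure.prod_prod, hsing, mul_zero]
    have hae : ∀ᵐ p ∂μ, ‖rosenblattKernel H eH t p.1 p.2‖ₑ^(2:ℝ) ≤
        ENNReal.ofReal (c₁ * (|p.1|^(-H) * |p.2|^H * |p.1-p.2|^(H-3/2)))
          + ENNReal.ofReal (c₁ * (|p.1|^H * |p.2|^(-H) * |p.1-p.2|^(H-3/2)))
          + ENNReal.ofReal (c₂ * (|p.1|^(-H) * |p.2|^(-H))) := by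
      filter_upwards [haeP, haeD, haeX, haeY] with p hp hpd hx hy
      obtain ⟨hp1, hp2⟩ := hp
      have hstep : ‖rosenblattKernel H eH t p.1 p.2‖ₑ^(2:ℝ)
          = ENNReal.ofReal ((rosenblattKernel H eH t p.1 p.2)^2) := by
        rw [Real.enorm_eq_ofReal_abs,
          ENNReal.ofReal_rpow_of_nonneg (abs_nonneg _) (by norm_num),
          show (2:ℝ) = ((2:ℕ):ℝ) by norm_num, Real.rpow_natCast, sq_abs]
      rw [hstep]
      have hS1 : (0:ℝ) ≤ c₁ * (|p.1|^(-H) * |p.2|^H * |p.1-p.2|^(H-3/2)) := by positivity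
      have hS2 : (0:ℝ) ≤ c₁ * (|p.1|^H * |p.2|^(-H) * |p.1-p.2|^(H-3/2)) := by positivity
      have hS3 : (0:ℝ) ≤ c₂ * (|p.1|^(-H) * |p.2|^(-H)) := by positivity
      have hreal : (rosenblattKernel H eH t p.1 p.2)^2 ≤
          c₁ * (|p.1|^(-H) * |p.2|^H * |p.1-p.2|^(H-3/2))
            + c₁ * (|p.1|^H * |p.2|^(-H) * |p.1-p.2|^(H-3/2))
            + c₂ * (|p.1|^(-H) * |p.2|^(-H)) := by
        rw [rosenblattKernel]
        simp only [Prod.mk.eta]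
        by_cases hmem : p ∈ Icc (0:ℝ) t ×ˢ Icc (0:ℝ) t
        · rw [Set.indicator_of_mem hmem]
          obtain ⟨hq1, hq2⟩ := (Set.mem_prod).1 hmem
          have h10 : (0:ℝ) < p.1 := lt_of_le_of_ne hq1.1 (Ne.symm hx)
          have h20 : (0:ℝ) < p.2 := lt_of_le_of_ne hq2.1 (Ne.symm hy)
          rcases lt_or_gt_of_ne hpd with h12 | h21
          · show (eH * (p.1*p.2) ^ (-(H/2)) * ∫ u in Ioc (max p.1 p.2) t,
                u ^ H * (u - p.1) ^ (H / 2 - 1) * (u - p.2) ^ (H / 2 - 1))^2 ≤ _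
            rw [max_eq_right h12.le]
            refine (core T H eH t p.1 p.2 hH1 hH2 h10 h12 hq2.2 htT).trans ?_
            rw [abs_of_pos h10, abs_of_pos h20, abs_sub_comm,
              abs_of_pos (by linarith : (0:ℝ) < p.2 - p.1)]
            have h0 : (0:ℝ) ≤ c₁ * (p.1^H * p.2^(-H) * (p.2-p.1)^(H-3/2)) :=
              mul_nonneg hc₁ (mul_nonneg (mul_nonneg (Real.rpow_nonneg h10.le _)
                (Real.rpow_nonneg h20.le _)) (Real.rpow_nonneg (by linarith) _))
            rw [hc₁def, hc₂def]
            rw [hc₁def] at h0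
            linarith
          · show (eH * (p.1*p.2) ^ (-(H/2)) * ∫ u in Ioc (max p.1 p.2) t,
                u ^ H * (u - p.1) ^ (H / 2 - 1) * (u - p.2) ^ (H / 2 - 1))^2 ≤ _
            rw [max_eq_left h21.le]
            have hswap : (eH * (p.1*p.2) ^ (-(H/2)) * ∫ u in Ioc p.1 t,
                u ^ H * (u - p.1) ^ (H / 2 - 1) * (u - p.2) ^ (H / 2 - 1))
                = (eH * (p.2*p.1) ^ (-(H/2)) * ∫ u in Ioc p.1 t,
                u ^ H * (u - p.2) ^ (H / 2 - 1) * (u - p.1) ^ (H / 2 - 1)) := by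
              rw [mul_comm p.1 p.2]
              congr 1
              exact integral_congr_ae (ae_of_all _ (fun u => by ring))
            rw [hswap]
            refine (core T H eH t p.2 p.1 hH1 hH2 h20 h21 hq1.2 htT).trans ?_
            rw [abs_of_pos h10, abs_of_pos h20,
              abs_of_pos (by linarith : (0:ℝ) < p.1 - p.2)]
            have h0 : (0:ℝ) ≤ c₁ * (p.1^(-H) * p.2^H * (p.1-p.2)^(H-3/2)) :=
              mul_nonneg hc₁ (mul_nonneg (mul_nonneg (Real.rpow_nonneg h10.le _)
                (Real.rpow_nonneg h20.le _)) (Real.rpow_nonneg (by linarith) _))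
            rw [hc₁def, hc₂def]
            rw [hc₁def] at h0
            linarith
        · rw [Set.indicator_of_notMem hmem]
          have : ((0:ℝ))^2 = 0 := by norm_num
          rw [this]
          linarith
      exact le_trans (ENNReal.ofReal_le_ofReal hreal)
        ((ENNReal.ofReal_add_le).trans (add_le_add_left ENNReal.ofReal_add_le _))
    -- finiteness of the three pieces
    have K0 : ∫⁻ x in Icc (0:ℝ) T, ENNReal.ofReal (|x|^(-H))
        = ENNReal.ofReal (T^(-H+1)/(-H+1)) := by
      rw [← Measure.restrict_congr_set Ioc_ae_eq_Icc,
        setLIntegral_congr_fun measurableSet_Ioc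
          (fun x hx => by rw [abs_of_pos hx.1]),
        L0 T (-H) hT.le (by linarith)]
    have T3 : ∫⁻ p : ℝ×ℝ, ENNReal.ofReal (c₂ * (|p.1|^(-H) * |p.2|^(-H))) ∂μ < ⊤ := by
      rw [hμ, lintegral_prod _ hm3.aemeasurable]
      show (∫⁻ x in Icc (0:ℝ) T, ∫⁻ y in Icc (0:ℝ) T,
        ENNReal.ofReal (c₂ * (|x|^(-H) * |y|^(-H)))) < ⊤
      have hinner : ∀ x : ℝ, (∫⁻ y in Icc (0:ℝ) T, ENNReal.ofReal (c₂ * (|x|^(-H) * |y|^(-H))))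
          = ENNReal.ofReal (c₂ * |x|^(-H)) * ENNReal.ofReal (T^(-H+1)/(-H+1)) := by
        intro x
        rw [← K0, ← lintegral_const_mul' _ _ ENNReal.ofReal_ne_top]
        refine lintegral_congr fun y => ?_
        rw [← ENNReal.ofReal_mul (mul_nonneg hc₂ (Real.rpow_nonneg (abs_nonneg _) _))]
        congr 1
        ring
      rw [lintegral_congr hinner, lintegral_mul_const' _ _ ENNReal.ofReal_ne_top]
      have houter : (∫⁻ x in Icc (0:ℝ) T, ENNReal.ofReal (c₂ * |x|^(-H)))
          = ENNReal.ofReal c₂ * ENNReal.ofReal (T^(-H+1)/(-H+1)) := by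
        rw [← K0, ← lintegral_const_mul' _ _ ENNReal.ofReal_ne_top]
        refine lintegral_congr fun x => ?_
        rw [← ENNReal.ofReal_mul hc₂]
      rw [houter]
      exact ENNReal.mul_lt_top (ENNReal.mul_lt_top ENNReal.ofReal_lt_top ENNReal.ofReal_lt_top)
        ENNReal.ofReal_lt_top
    have T1 : ∫⁻ p : ℝ×ℝ,
        ENNReal.ofReal (c₁ * (|p.1|^(-H) * |p.2|^H * |p.1-p.2|^(H-3/2))) ∂μ < ⊤ := by
      rw [hμ, lintegral_prod_symm _ hm1.aemeasurable]
      show (∫⁻ y in Icc (0:ℝ) T, ∫⁻ x in Icc (0:ℝ) T,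
        ENNReal.ofReal (c₁ * (|x|^(-H) * |y|^H * |x-y|^(H-3/2)))) < ⊤
      have hinner : ∀ y : ℝ, (∫⁻ x in Icc (0:ℝ) T,
          ENNReal.ofReal (c₁ * (|x|^(-H) * |y|^H * |x-y|^(H-3/2))))
          = ENNReal.ofReal (c₁ * |y|^H) *
            ∫⁻ x in Icc (0:ℝ) T, ENNReal.ofReal (|x|^(-H) * |x-y|^(H-3/2)) := by
        intro y
        rw [← lintegral_const_mul' _ _ ENNReal.ofReal_ne_top]
        refine lintegral_congr fun x => ?_
        rw [← ENNReal.ofReal_mul (mul_nonneg hc₁ (Real.rpow_nonneg (abs_nonneg _) _)),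
          show (c₁ * |y|^H) * (|x|^(-H) * |x-y|^(H-3/2))
            = c₁ * (|x|^(-H) * |y|^H * |x-y|^(H-3/2)) by ring]
      rw [lintegral_congr hinner]
      exact L2 T H c₁ _ hH1 hH2 hT hc₁ hcL _ (fun y hy => L1 T H hH1 hH2 hy)
    have T2 : ∫⁻ p : ℝ×ℝ,
        ENNReal.ofReal (c₁ * (|p.1|^H * |p.2|^(-H) * |p.1-p.2|^(H-3/2))) ∂μ < ⊤ := by
      rw [hμ, lintegral_prod _ hm2.aemeasurable]
      show (∫⁻ x in Icc (0:ℝ) T, ∫⁻ y in Icc (0:ℝ) T,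
        ENNReal.ofReal (c₁ * (|x|^H * |y|^(-H) * |x-y|^(H-3/2)))) < ⊤
      have hinner : ∀ x : ℝ, (∫⁻ y in Icc (0:ℝ) T,
          ENNReal.ofReal (c₁ * (|x|^H * |y|^(-H) * |x-y|^(H-3/2))))
          = ENNReal.ofReal (c₁ * |x|^H) *
            ∫⁻ y in Icc (0:ℝ) T, ENNReal.ofReal (|y|^(-H) * |y-x|^(H-3/2)) := by
        intro x
        rw [← lintegral_const_mul' _ _ ENNReal.ofReal_ne_top]
        refine lintegral_congr fun y => ?_
        rw [← ENNReal.ofReal_mul (mul_nonneg hc₁ (Real.rpow_nonneg (abs_nonneg _) _)),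
          show (c₁ * |x|^H) * (|y|^(-H) * |y-x|^(H-3/2))
            = c₁ * (|x|^H * |y|^(-H) * |y-x|^(H-3/2)) by ring, abs_sub_comm y x]
      rw [lintegral_congr hinner]
      exact L2 T H c₁ _ hH1 hH2 hT hc₁ hcL _ (fun x hx => L1 T H hH1 hH2 hx)
    calc ∫⁻ p, ‖rosenblattKernel H eH t p.1 p.2‖ₑ^(2:ℝ) ∂μ
        ≤ ∫⁻ p, (ENNReal.ofReal (c₁ * (|p.1|^(-H) * |p.2|^H * |p.1-p.2|^(H-3/2)))
            + ENNReal.ofReal (c₁ * (|p.1|^H * |p.2|^(-H) * |p.1-p.2|^(H-3/2)))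
            + ENNReal.ofReal (c₂ * (|p.1|^(-H) * |p.2|^(-H)))) ∂μ := lintegral_mono_ae hae
      _ = (∫⁻ p : ℝ×ℝ, ENNReal.ofReal (c₁ * (|p.1|^(-H) * |p.2|^H * |p.1-p.2|^(H-3/2))) ∂μ)
            + (∫⁻ p : ℝ×ℝ, ENNReal.ofReal (c₁ * (|p.1|^H * |p.2|^(-H) * |p.1-p.2|^(H-3/2))) ∂μ)
            + ∫⁻ p : ℝ×ℝ, ENNReal.ofReal (c₂ * (|p.1|^(-H) * |p.2|^(-H))) ∂μ := by
          rw [lintegral_add_left (show Measurable (fun p : ℝ×ℝ =>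
              ENNReal.ofReal (c₁ * (|p.1|^(-H) * |p.2|^H * |p.1-p.2|^(H-3/2)))
              + ENNReal.ofReal (c₁ * (|p.1|^H * |p.2|^(-H) * |p.1-p.2|^(H-3/2)))) from hm1.add hm2),
            lintegral_add_left hm1]
      _ < ⊤ := ENNReal.add_lt_top.mpr ⟨ENNReal.add_lt_top.mpr ⟨T1, T2⟩, T3⟩
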